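/- The relation ≤_W^f is transitive: for all partial functions f, g, h on Baire space, if f ≤_W ĝ_{<∞} and g ≤_W ĥ_{<∞}, then f ≤_W ĥ_{<∞}. -/

import Mathlib

abbrev Baire : Type := ℕ → ℕ

/-- Continuous Weihrauch reducibility between partial functions on Baire space,
given as a total function together with its domain. -/
def WLE (f : Baire → Baire) (domf : Set Baire)
    (g : Baire → Baire) (domg : Set Baire) : Prop :=
  ∃ (G : Baire → Baire) (F : Baire × Baire → Baire),
    ContinuousOn G domf ∧
    Set.MapsTo G domf domg ∧
    ContinuousOn F ((fun x => (x, g (G x))) '' domf) ∧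
    ∀ x ∈ domf, f x = F (x, g (G x))

/-- The n-th component of w with respect to the pairing: w_n(m) = w(π(n, m)). -/
def component (w : Baire) (n : ℕ) : Baire := fun m => w (Nat.pair n m)

/-- The parallelization f̂, as a total function: f̂(w)(π(n, m)) = f(w_n)(m). -/
def parMap (f : Baire → Baire) : Baire → Baire :=
  fun w k => f (component w (Nat.unpair k).1) (Nat.unpair k).2

/-- Domain of the parallelization f̂. -/
def parDom (D : Set Baire) : Set Baire := {w | ∀ n, component w n ∈ D}

/-- Domain of the finite parallelization f̂_{<∞}: only finitely many components
differ from the constant zero sequence. -/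
def finParDom (D : Set Baire) : Set Baire :=
  {w | (∀ n, component w n ∈ D) ∧ {n | component w n ≠ fun _ => 0}.Finite}

open Filter Topology Set

namespace FT

/-! ### Basic topology facts on Baire space -/

lemma nat_tendsto_iff {α : Type*} {l : Filter α} {φ : α → ℕ} {a : ℕ} :
    Filter.Tendsto φ l (𝓝 a) ↔ ∀ᶠ x in l, φ x = a := by
  rw [nhds_discrete, Filter.tendsto_pure]

lemma baire_tendsto_iff {α : Type*} {l : Filter α} {φ : α → Baire} {a : Baire} :
    Filter.Tendsto φ l (𝓝 a) ↔ ∀ p : ℕ, ∀ᶠ x in l, φ x p = a p := by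
  rw [tendsto_pi_nhds]
  exact forall_congr' fun p => nat_tendsto_iff

lemma eventually_agree (w : Baire) (M : ℕ) : ∀ᶠ w' in 𝓝 w, ∀ i ≤ M, w' i = w i := by
  have h : ∀ᶠ w' in 𝓝 w, ∀ i ∈ Finset.range (M + 1), w' i = w i :=
    (Filter.eventually_all_finset _).2
      (fun i _ => nat_tendsto_iff.1 ((continuous_apply i).tendsto w))
  filter_upwards [h] with w' hw' i hi
  exact hw' i (Finset.mem_range.2 (Nat.lt_succ_of_le hi))

lemma eventually_agree2 (w Y : Baire) (M : ℕ) :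
    ∀ᶠ p : Baire × Baire in 𝓝 (w, Y), (∀ i ≤ M, p.1 i = w i) ∧ (∀ i ≤ M, p.2 i = Y i) := by
  rw [nhds_prod_eq]
  exact ((eventually_agree w M).prod_inl _).and ((eventually_agree Y M).prod_inr _)

lemma continuous_component (n : ℕ) : Continuous (fun w : Baire => component w n) :=
  continuous_pi fun m => continuous_apply (Nat.pair n m)

lemma pair_le_pair_right (a : ℕ) {b c : ℕ} (h : b ≤ c) : Nat.pair a b ≤ Nat.pair a c := by
  rcases h.lt_or_eq with h | h
  · exact (Nat.pair_lt_pair_right a h).le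
  · rw [h]

/-! ### First nonzero index -/

noncomputable def delta (y : Baire) : ℕ := sInf {i | y i ≠ 0}

lemma delta_spec {y : Baire} (hy : y ≠ fun _ => 0) : y (delta y) ≠ 0 := by
  obtain ⟨i, hi⟩ := Function.ne_iff.1 hy
  exact Nat.sInf_mem (⟨i, hi⟩ : {i | y i ≠ 0}.Nonempty)

lemma delta_lt {y : Baire} {i : ℕ} (h : i < delta y) : y i = 0 := by
  by_contra hi
  exact absurd (Nat.sInf_le (show i ∈ {i | y i ≠ 0} from hi)) (not_le.2 h)

lemma delta_eq {y : Baire} {j : ℕ} (h1 : y j ≠ 0) (h2 : ∀ i < j, y i = 0) : delta y = j := by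
  refine le_antisymm (Nat.sInf_le h1) (le_csInf ⟨j, h1⟩ ?_)
  intro b hb
  by_contra hbc
  exact hb (h2 b (not_le.1 hbc))

/-! ### Elements: positions of first nonzero entries of blocks -/

def isElem (w : Baire) (c : ℕ) : Prop :=
  w c ≠ 0 ∧ ∀ i < (Nat.unpair c).2, w (Nat.pair (Nat.unpair c).1 i) = 0

lemma isElem_pair {w : Baire} {n j : ℕ} :
    isElem w (Nat.pair n j) ↔ (component w n j ≠ 0 ∧ ∀ i < j, component w n i = 0) := by
  simp only [isElem, Nat.unpair_pair, component]

lemma isElem_mk {w : Baire} {n : ℕ} (hy : component w n ≠ fun _ => 0) :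
    isElem w (Nat.pair n (delta (component w n))) :=
  isElem_pair.2 ⟨delta_spec hy, fun _ hi => delta_lt hi⟩

lemma isElem_block {w : Baire} {c : ℕ} (h : isElem w c) :
    component w ((Nat.unpair c).1) ≠ fun _ => 0 := by
  refine Function.ne_iff.2 ⟨(Nat.unpair c).2, ?_⟩
  have h1 := h.1
  rwa [show w c = component w ((Nat.unpair c).1) ((Nat.unpair c).2) by
    rw [component, Nat.pair_unpair]] at h1

lemma isElem_snd {w : Baire} {c : ℕ} (h : isElem w c) :
    delta (component w ((Nat.unpair c).1)) = (Nat.unpair c).2 := by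
  have h1 := h.1
  rw [show w c = component w ((Nat.unpair c).1) ((Nat.unpair c).2) by
    rw [component, Nat.pair_unpair]] at h1
  exact delta_eq h1 (fun i hi => h.2 i hi)

lemma isElem_eq_mk {w : Baire} {c : ℕ} (h : isElem w c) :
    c = Nat.pair ((Nat.unpair c).1) (delta (component w ((Nat.unpair c).1))) := by
  rw [isElem_snd h, Nat.pair_unpair]

lemma isElem_local {w w' : Baire} {c : ℕ} (hag : ∀ p ≤ c, w' p = w p) :
    isElem w' c ↔ isElem w c := by
  have hle : ∀ i, i < (Nat.unpair c).2 → Nat.pair (Nat.unpair c).1 i ≤ c := by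
    intro i hi
    conv_rhs => rw [← Nat.pair_unpair c]
    exact pair_le_pair_right _ hi.le
  constructor <;> intro h
  · refine ⟨by rw [← hag c le_rfl]; exact h.1, fun i hi => ?_⟩
    rw [← hag _ (hle i hi)]
    exact h.2 i hi
  · refine ⟨by rw [hag c le_rfl]; exact h.1, fun i hi => ?_⟩
    rw [hag _ (hle i hi)]
    exact h.2 i hi

lemma Es_finite {w : Baire} (hw : {n | component w n ≠ fun _ => 0}.Finite) :
    {c | isElem w c}.Finite := by
  refine Set.Finite.subset (hw.image (fun n => Nat.pair n (delta (component w n)))) ?_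
  intro c hc
  exact ⟨(Nat.unpair c).1, isElem_block hc, (isElem_eq_mk hc).symm⟩

/-! ### parMap and finParDom helpers -/

lemma parMap_pair (f : Baire → Baire) (W : Baire) (B m : ℕ) :
    parMap f W (Nat.pair B m) = f (component W B) m := by
  simp only [parMap, Nat.unpair_pair]

lemma component_parMap (f : Baire → Baire) (W : Baire) (B : ℕ) :
    component (parMap f W) B = f (component W B) := by
  funext m
  rw [component, parMap_pair]

lemma zero_mem_of_finPar {D : Set Baire} {w : Baire} (hw : w ∈ finParDom D) :
    (fun _ => 0 : Baire) ∈ D := by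
  obtain ⟨n, hn⟩ := (hw.2.infinite_compl).nonempty
  have h := hw.1 n
  simp only [Set.mem_compl_iff, Set.mem_setOf_eq, not_not] at hn
  rwa [hn] at h

/-! ### The construction -/

section Construction

variable (G2 : Baire → Baire) (kst : ℕ) (u : ℕ → Baire)

open Classical in
/-- Sentinel rows: row `r` watches for elements `≥ r`; it is active when `r = 0` or
`r - 1` is an element.  When no element `≥ r` exists it is "armed" with value
`z_kst`; when one exists it carries `u` applied to the least such element. -/
noncomputable def sentinel (w : Baire) (r : ℕ) : Baire :=
  if (r = 0 ∨ isElem w (r - 1)) then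
    (if {c | isElem w c ∧ r ≤ c}.Nonempty then u (sInf {c | isElem w c ∧ r ≤ c})
     else component (G2 (fun _ => 0)) kst)
  else (fun _ => 0)

open Classical in
/-- The block with index `B` of the constructed forward functional. -/
noncomputable def content (w : Baire) (B : ℕ) : Baire :=
  if (Nat.unpair B).1 = 0 then component (G2 (fun _ => 0)) ((Nat.unpair B).2)
  else if (Nat.unpair B).1 = 1 then
    (if isElem w ((Nat.unpair ((Nat.unpair B).2)).1) then
      component (G2 (component w ((Nat.unpair ((Nat.unpair ((Nat.unpair B).2)).1)).1)))
        ((Nat.unpair ((Nat.unpair B).2)).2)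
     else (fun _ => 0))
  else if (Nat.unpair B).1 = 2 then sentinel G2 kst u w ((Nat.unpair B).2)
  else (fun _ => 0)

noncomputable def Gbig (w : Baire) : Baire :=
  fun p => content G2 kst u w ((Nat.unpair p).1) ((Nat.unpair p).2)

lemma component_Gbig (w : Baire) (B : ℕ) :
    component (Gbig G2 kst u w) B = content G2 kst u w B := by
  funext i
  simp only [component, Gbig, Nat.unpair_pair]

lemma content_t0 (w : Baire) (k : ℕ) :
    content G2 kst u w (Nat.pair 0 k) = component (G2 (fun _ => 0)) k := by
  simp [content, Nat.unpair_pair]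

open Classical in
lemma content_t1 (w : Baire) (c k : ℕ) :
    content G2 kst u w (Nat.pair 1 (Nat.pair c k)) =
      (if isElem w c then component (G2 (component w ((Nat.unpair c).1))) k
       else (fun _ => 0)) := by
  simp [content, Nat.unpair_pair]

lemma content_t2 (w : Baire) (r : ℕ) :
    content G2 kst u w (Nat.pair 2 r) = sentinel G2 kst u w r := by
  simp [content, Nat.unpair_pair]

/-- Reading back the answer rows. -/
noncomputable def Psi0 (Y : Baire) : Baire :=
  fun p => Y (Nat.pair (Nat.pair 0 ((Nat.unpair p).1)) ((Nat.unpair p).2))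

noncomputable def PsiC (c : ℕ) (Y : Baire) : Baire :=
  fun p => Y (Nat.pair (Nat.pair 1 (Nat.pair c ((Nat.unpair p).1))) ((Nat.unpair p).2))

lemma continuous_Psi0 : Continuous (fun Y : Baire => Psi0 Y) :=
  continuous_pi fun _ => continuous_apply _

lemma continuous_PsiC (c : ℕ) : Continuous (fun Y : Baire => PsiC c Y) :=
  continuous_pi fun _ => continuous_apply _

variable (h : Baire → Baire)

lemma Psi0_graph (w : Baire) :
    Psi0 (parMap h (Gbig G2 kst u w)) = parMap h (G2 (fun _ => 0)) := by
  funext p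
  show parMap h (Gbig G2 kst u w) (Nat.pair (Nat.pair 0 ((Nat.unpair p).1)) ((Nat.unpair p).2))
    = parMap h (G2 (fun _ => 0)) p
  rw [parMap_pair, component_Gbig, content_t0]
  rfl

lemma PsiC_graph {w : Baire} {c : ℕ} (hc : isElem w c) :
    PsiC c (parMap h (Gbig G2 kst u w))
      = parMap h (G2 (component w ((Nat.unpair c).1))) := by
  funext p
  show parMap h (Gbig G2 kst u w)
      (Nat.pair (Nat.pair 1 (Nat.pair c ((Nat.unpair p).1))) ((Nat.unpair p).2))
    = parMap h (G2 (component w ((Nat.unpair c).1))) p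
  rw [parMap_pair, component_Gbig, content_t1, if_pos hc]
  rfl

open Classical in
/-- The constructed backward functional. -/
noncomputable def Fbig (F2 : Baire × Baire → Baire) (p : Baire × Baire) : Baire :=
  fun q =>
    (if component p.1 ((Nat.unpair q).1) = (fun _ => 0) then
       F2 ((fun _ => 0), Psi0 p.2)
     else
       F2 (component p.1 ((Nat.unpair q).1),
           PsiC (Nat.pair ((Nat.unpair q).1) (delta (component p.1 ((Nat.unpair q).1)))) p.2))
    ((Nat.unpair q).2)

variable {domg domh : Set Baire}

lemma Gbig_maps (hG2maps : Set.MapsTo G2 domg (finParDom domh))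
    (h0g : (fun _ => 0 : Baire) ∈ domg) (hu_mem : ∀ P, u P ∈ domh) :
    Set.MapsTo (Gbig G2 kst u) (finParDom domg) (finParDom domh) := by
  intro w hw
  have hz : G2 (fun _ => 0) ∈ finParDom domh := hG2maps h0g
  have h0h : (fun _ => 0 : Baire) ∈ domh := zero_mem_of_finPar hz
  constructor
  · intro B
    rw [component_Gbig]
    unfold content sentinel
    split_ifs
    all_goals first
      | exact hz.1 _
      | exact (hG2maps (hw.1 _)).1 _
      | exact hu_mem _
      | exact h0h
  · have hEfin : {c | isElem w c}.Finite := Es_finite hw.2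
    have hbig : ({B | component (Gbig G2 kst u w) B ≠ fun _ => 0}) ⊆
        ((fun k => Nat.pair 0 k) '' {k | component (G2 (fun _ => 0)) k ≠ fun _ => 0}) ∪
        ((fun cr => Nat.pair 1 cr) ''
          (⋃ c ∈ {c | isElem w c},
            (fun k => Nat.pair c k) ''
              {k | component (G2 (component w ((Nat.unpair c).1))) k ≠ fun _ => 0})) ∪
        ((fun r => Nat.pair 2 r) '' (insert 0 ((fun c => c + 1) '' {c | isElem w c}))) := by
      intro B hB
      rw [Set.mem_setOf_eq, component_Gbig] at hB
      set t := (Nat.unpair B).1 with ht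
      set r := (Nat.unpair B).2 with hr
      have hBtr : B = Nat.pair t r := (Nat.pair_unpair B).symm
      by_cases h0 : t = 0
      · left; left
        refine ⟨r, ?_, by rw [hBtr, h0]⟩
        rw [hBtr, h0, content_t0] at hB
        exact hB
      by_cases h1 : t = 1
      · left; right
        set c := (Nat.unpair r).1 with hc'
        set k := (Nat.unpair r).2 with hk'
        have hrck : r = Nat.pair c k := (Nat.pair_unpair r).symm
        rw [hBtr, h1, hrck, content_t1] at hB
        by_cases hc : isElem w c
        · rw [if_pos hc] at hB
          refine ⟨r, ?_, by rw [hBtr, h1]⟩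
          rw [Set.mem_iUnion₂]
          exact ⟨c, hc, ⟨k, hB, hrck.symm⟩⟩
        · rw [if_neg hc] at hB
          exact absurd rfl hB
      by_cases h2 : t = 2
      · right
        rw [hBtr, h2, content_t2] at hB
        refine ⟨r, ?_, by rw [hBtr, h2]⟩
        unfold sentinel at hB
        by_cases hr0 : r = 0
        · exact Set.mem_insert_iff.2 (Or.inl hr0)
        split_ifs at hB with hact hne
        · rcases hact with h | h
          · exact absurd h hr0
          · exact Set.mem_insert_iff.2 (Or.inr ⟨r - 1, h, Nat.succ_pred_eq_of_pos (Nat.pos_of_ne_zero hr0)⟩)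
        · rcases hact with h | h
          · exact absurd h hr0
          · exact Set.mem_insert_iff.2 (Or.inr ⟨r - 1, h, Nat.succ_pred_eq_of_pos (Nat.pos_of_ne_zero hr0)⟩)
        · exact absurd rfl hB
      · rw [hBtr] at hB
        have hz0 : content G2 kst u w (Nat.pair t r) = fun _ => 0 := by
          simp [content, Nat.unpair_pair, h0, h1, h2]
        exact absurd hz0 hB
    refine Set.Finite.subset (Set.Finite.union (Set.Finite.union ?_ ?_) ?_) hbig
    · exact hz.2.image _
    · exact (hEfin.biUnion (fun c _ => ((hG2maps (hw.1 _)).2.image _))).image _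
    · exact ((hEfin.image _).insert 0).image _

lemma Gbig_cont (hG2cont : ContinuousOn G2 domg)
    (hu_close : ∀ P i, i < P → u P i = component (G2 (fun _ => 0)) kst i) :
    ContinuousOn (Gbig G2 kst u) (finParDom domg) := by
  intro w hw
  have evag : ∀ M : ℕ, ∀ᶠ w' in 𝓝[finParDom domg] w, ∀ i ≤ M, w' i = w i :=
    fun M => (eventually_agree w M).filter_mono nhdsWithin_le_nhds
  have evE : ∀ M : ℕ, ∀ᶠ w' in 𝓝[finParDom domg] w, ∀ c ≤ M, (isElem w' c ↔ isElem w c) := by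
    intro M
    filter_upwards [evag M] with w' hw' c hc
    exact isElem_local (fun p hp => hw' p (le_trans hp hc))
  have hblk : ∀ n : ℕ, Filter.Tendsto (fun w' => G2 (component w' n))
      (𝓝[finParDom domg] w) (𝓝 (G2 (component w n))) := by
    intro n
    have h1 : Filter.Tendsto (fun w' => component w' n)
        (𝓝[finParDom domg] w) (𝓝[domg] (component w n)) := by
      apply tendsto_nhdsWithin_of_tendsto_nhds_of_eventually_within
      · exact ((continuous_component n).tendsto w).mono_left nhdsWithin_le_nhds
      · exact eventually_mem_nhdsWithin.mono (fun w' hw' => hw'.1 n)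
    exact Filter.Tendsto.comp (hG2cont (component w n) (hw.1 n)) h1
  have evblk : ∀ n M : ℕ, ∀ᶠ w' in 𝓝[finParDom domg] w,
      ∀ j ≤ M, G2 (component w' n) j = G2 (component w n) j :=
    fun n M => (hblk n).eventually (eventually_agree _ M)
  refine baire_tendsto_iff.2 ?_
  intro p
  have hGp : ∀ w'' : Baire,
      Gbig G2 kst u w'' p = content G2 kst u w'' ((Nat.unpair p).1) ((Nat.unpair p).2) :=
    fun _ => rfl
  simp only [hGp]
  set B := (Nat.unpair p).1 with hBdef
  set i := (Nat.unpair p).2 with hidef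
  set t := (Nat.unpair B).1 with htdef
  set r := (Nat.unpair B).2 with hrdef
  have hBtr : B = Nat.pair t r := (Nat.pair_unpair B).symm
  by_cases h0 : t = 0
  · apply Filter.Eventually.of_forall
    intro w'
    rw [hBtr, h0, content_t0, content_t0]
  by_cases h1 : t = 1
  · set c := (Nat.unpair r).1 with hcdef
    set k := (Nat.unpair r).2 with hkdef
    have hrck : r = Nat.pair c k := (Nat.pair_unpair r).symm
    by_cases hc : isElem w c
    · filter_upwards [evE c, evblk ((Nat.unpair c).1) (Nat.pair k i)] with w' hE hq
      rw [hBtr, h1, hrck, content_t1, content_t1, if_pos hc, if_pos ((hE c le_rfl).2 hc)]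
      exact hq _ le_rfl
    · filter_upwards [evE c] with w' hE
      rw [hBtr, h1, hrck, content_t1, content_t1, if_neg hc,
        if_neg (fun hh => hc ((hE c le_rfl).1 hh))]
  by_cases h2 : t = 2
  · by_cases hact : (r = 0 ∨ isElem w (r - 1))
    · by_cases hne : {c | isElem w c ∧ r ≤ c}.Nonempty
      · set c2 := sInf {c | isElem w c ∧ r ≤ c} with hc2def
        have hc2 : isElem w c2 ∧ r ≤ c2 := Nat.sInf_mem hne
        filter_upwards [evE c2] with w' hE
        rw [hBtr, h2, content_t2, content_t2]
        have hact' : (r = 0 ∨ isElem w' (r - 1)) := by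
          rcases hact with hh | hh
          · exact Or.inl hh
          · exact Or.inr ((hE (r - 1) (le_trans (Nat.sub_le r 1) hc2.2)).2 hh)
        have hmem' : isElem w' c2 ∧ r ≤ c2 := ⟨(hE c2 le_rfl).2 hc2.1, hc2.2⟩
        have hne' : {c | isElem w' c ∧ r ≤ c}.Nonempty := ⟨c2, hmem'⟩
        have hinf' : sInf {c | isElem w' c ∧ r ≤ c} = c2 := by
          refine le_antisymm (Nat.sInf_le hmem') (le_csInf hne' ?_)
          intro b hb
          by_contra hbc
          push_neg at hbc
          have hbE : isElem w b := (hE b hbc.le).1 hb.1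
          have hge := Nat.sInf_le (show b ∈ {c | isElem w c ∧ r ≤ c} from ⟨hbE, hb.2⟩)
          rw [← hc2def] at hge
          omega
        unfold sentinel
        rw [if_pos hact, if_pos hact', if_pos hne, if_pos hne', hinf', ← hc2def]
      · filter_upwards [evE (max i r)] with w' hE
        rw [hBtr, h2, content_t2, content_t2]
        have hact' : (r = 0 ∨ isElem w' (r - 1)) := by
          rcases hact with hh | hh
          · exact Or.inl hh
          · exact Or.inr ((hE (r - 1) (le_trans (Nat.sub_le r 1) (le_max_right i r))).2 hh)
        unfold sentinel
        rw [if_pos hact, if_pos hact', if_neg hne]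
        by_cases hne' : {c | isElem w' c ∧ r ≤ c}.Nonempty
        · rw [if_pos hne']
          set c2' := sInf {c | isElem w' c ∧ r ≤ c} with hc2'def
          have hc2' : isElem w' c2' ∧ r ≤ c2' := Nat.sInf_mem hne'
          have hgt : max i r < c2' := by
            by_contra hle
            push_neg at hle
            exact hne ⟨c2', (hE c2' hle).1 hc2'.1, hc2'.2⟩
          exact hu_close c2' i (lt_of_le_of_lt (le_max_left i r) hgt)
        · rw [if_neg hne']
    · filter_upwards [evE (r - 1)] with w' hE
      rw [hBtr, h2, content_t2, content_t2]
      have hact' : ¬(r = 0 ∨ isElem w' (r - 1)) := by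
        intro hh
        apply hact
        rcases hh with hh | hh
        · exact Or.inl hh
        · exact Or.inr ((hE (r - 1) le_rfl).1 hh)
      unfold sentinel
      rw [if_neg hact, if_neg hact']
  · apply Filter.Eventually.of_forall
    intro w'
    have e1 : content G2 kst u w' B = fun _ => 0 := by
      simp [content, ← htdef, h0, h1, h2]
    have e2 : content G2 kst u w B = fun _ => 0 := by
      simp [content, ← htdef, h0, h1, h2]
    rw [e1, e2]

open Classical in
lemma Fbig_apply (F2 : Baire × Baire → Baire) (x Y : Baire) (q : ℕ) :
    Fbig F2 (x, Y) q =
      (if component x ((Nat.unpair q).1) = (fun _ => 0) then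
         F2 ((fun _ => 0), Psi0 Y)
       else
         F2 (component x ((Nat.unpair q).1),
             PsiC (Nat.pair ((Nat.unpair q).1) (delta (component x ((Nat.unpair q).1)))) Y))
      ((Nat.unpair q).2) := rfl

lemma Fbig_correct (g : Baire → Baire) (F2 : Baire × Baire → Baire)
    (hF2eq : ∀ y ∈ domg, g y = F2 (y, parMap h (G2 y)))
    (h0g : (fun _ => 0 : Baire) ∈ domg) :
    ∀ w ∈ finParDom domg,
      parMap g w = Fbig F2 (w, parMap h (Gbig G2 kst u w)) := by
  intro w hw
  funext q
  have hL : parMap g w q = g (component w ((Nat.unpair q).1)) ((Nat.unpair q).2) := rfl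
  rw [hL, Fbig_apply]
  by_cases hy : component w ((Nat.unpair q).1) = (fun _ => 0)
  · rw [if_pos hy, Psi0_graph, hy]
    exact congrFun (hF2eq _ h0g) _
  · rw [if_neg hy, PsiC_graph G2 kst u h (isElem_mk hy)]
    simp only [Nat.unpair_pair]
    exact congrFun (hF2eq _ (hw.1 _)) _

lemma Fbig_cont (F2 : Baire × Baire → Baire) (Vst : ℕ)
    (hG2cont : ContinuousOn G2 domg)
    (hG2maps : Set.MapsTo G2 domg (finParDom domh))
    (hF2cont : ContinuousOn F2 ((fun y => (y, parMap h (G2 y))) '' domg))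
    (h0g : (fun _ => 0 : Baire) ∈ domg)
    (hdich : (∀ P, ∃ j < Vst, h (u P) j ≠ h (component (G2 (fun _ => 0)) kst) j) ∨
             (∀ k V, ∃ P, ∀ uu, uu ∈ domh →
               (∀ i < P, uu i = component (G2 (fun _ => 0)) k i) →
               ∀ j < V, h uu j = h (component (G2 (fun _ => 0)) k) j)) :
    ContinuousOn (Fbig F2)
      ((fun w => (w, parMap h (Gbig G2 kst u w))) '' (finParDom domg)) := by
  rintro _ ⟨w, hw, rfl⟩
  set A := (fun w => (w, parMap h (Gbig G2 kst u w))) '' (finParDom domg) with hAdef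
  set Yw := parMap h (Gbig G2 kst u w) with hYwdef
  have evA : ∀ᶠ p' in 𝓝[A] (w, Yw), p' ∈ A := eventually_mem_nhdsWithin
  have evag : ∀ M : ℕ, ∀ᶠ p' in 𝓝[A] (w, Yw),
      (∀ i ≤ M, p'.1 i = w i) ∧ (∀ i ≤ M, p'.2 i = Yw i) :=
    fun M => (eventually_agree2 w Yw M).filter_mono nhdsWithin_le_nhds
  refine baire_tendsto_iff.2 ?_
  intro q
  set n := (Nat.unpair q).1 with hndef
  set m := (Nat.unpair q).2 with hmdef
  by_cases hy : component w n = (fun _ => 0)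
  -- ===================== CASE: the n-th block of w is zero =====================
  · have hval : Fbig F2 (w, Yw) q = F2 ((fun _ => 0), parMap h (G2 (fun _ => 0))) m := by
      rw [Fbig_apply, if_pos hy, hYwdef, Psi0_graph]
    rcases hdich with hB | hA
    -- ------------- Case B : sentinels fire -------------
    · have hEfin : {c | isElem w c}.Finite := Es_finite hw.2
      obtain ⟨r0, hact, hbeyond⟩ :
          ∃ r0 : ℕ, (r0 = 0 ∨ isElem w (r0 - 1)) ∧
            ¬ {c | isElem w c ∧ r0 ≤ c}.Nonempty := by
        by_cases hne : {c | isElem w c}.Nonempty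
        · have hsne : hEfin.toFinset.Nonempty := by
            rwa [Set.Finite.toFinset_nonempty]
          refine ⟨hEfin.toFinset.max' hsne + 1, Or.inr ?_, ?_⟩
          · have hmem := hEfin.toFinset.max'_mem hsne
            rw [Set.Finite.mem_toFinset] at hmem
            simpa using hmem
          · rintro ⟨c, hc, hrc⟩
            have hle : c ≤ hEfin.toFinset.max' hsne :=
              hEfin.toFinset.le_max' c (by rwa [Set.Finite.mem_toFinset])
            omega
        · exact ⟨0, Or.inl rfl, fun ⟨c, hc, _⟩ => hne ⟨c, hc⟩⟩
      have hsw : sentinel G2 kst u w r0 = component (G2 (fun _ => 0)) kst := by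
        unfold sentinel
        rw [if_pos hact, if_neg hbeyond]
      have hYwrow : ∀ j, Yw (Nat.pair (Nat.pair 2 r0) j)
          = h (component (G2 (fun _ => 0)) kst) j := by
        intro j
        rw [hYwdef, parMap_pair, component_Gbig, content_t2, hsw]
      filter_upwards [evA, evag (max (Nat.pair n r0) (Nat.pair (Nat.pair 2 r0) Vst))]
        with p' hp' hag
      obtain ⟨w', hw', rfl⟩ := hp'
      have hag1 : ∀ i ≤ max (Nat.pair n r0) (Nat.pair (Nat.pair 2 r0) Vst), w' i = w i :=
        hag.1
      have hag2 : ∀ i ≤ max (Nat.pair n r0) (Nat.pair (Nat.pair 2 r0) Vst),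
          parMap h (Gbig G2 kst u w') i = Yw i := hag.2
      have hyn' : component w' n = (fun _ => 0) := by
        by_contra hne'
        have hδ0 : ∀ i < r0, component w' n i = 0 := by
          intro i hi
          have hle : Nat.pair n i ≤ max (Nat.pair n r0) (Nat.pair (Nat.pair 2 r0) Vst) :=
            le_trans (pair_le_pair_right n hi.le) (le_max_left _ _)
          have he : w' (Nat.pair n i) = w (Nat.pair n i) := hag1 _ hle
          have hz0 : component w n i = 0 := by rw [hy]
          exact he.trans hz0
        have hδr : r0 ≤ delta (component w' n) := by
          by_contra hlt
          push_neg at hlt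
          exact delta_spec hne' (hδ0 _ hlt)
        have hc'E : isElem w' (Nat.pair n (delta (component w' n))) := isElem_mk hne'
        have hbne' : {c | isElem w' c ∧ r0 ≤ c}.Nonempty :=
          ⟨Nat.pair n (delta (component w' n)), hc'E,
            le_trans hδr (Nat.right_le_pair _ _)⟩
        have hact' : (r0 = 0 ∨ isElem w' (r0 - 1)) := by
          rcases hact with hh | hh
          · exact Or.inl hh
          · refine Or.inr ((isElem_local (fun p hp => hag1 p ?_)).2 hh)
            exact le_trans hp (le_trans (le_trans (Nat.sub_le r0 1)
              (Nat.right_le_pair n r0)) (le_max_left _ _))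
        have hsent' : sentinel G2 kst u w' r0
            = u (sInf {c | isElem w' c ∧ r0 ≤ c}) := by
          unfold sentinel
          rw [if_pos hact', if_pos hbne']
        obtain ⟨j, hjV, hjne⟩ := hB (sInf {c | isElem w' c ∧ r0 ≤ c})
        have hco : Nat.pair (Nat.pair 2 r0) j
            ≤ max (Nat.pair n r0) (Nat.pair (Nat.pair 2 r0) Vst) :=
          le_trans (pair_le_pair_right _ hjV.le) (le_max_right _ _)
        have hagY := hag2 _ hco
        rw [parMap_pair, component_Gbig, content_t2, hsent', hYwrow j] at hagY
        exact hjne hagY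
      rw [hval, Fbig_apply, if_pos hyn', Psi0_graph]
    -- ------------- Case A : h is continuous at the components of z -------------
    · have hblk : Filter.Tendsto (fun p' : Baire × Baire => component p'.1 n)
          (𝓝[A] (w, Yw)) (𝓝[domg] (fun _ => 0)) := by
        apply tendsto_nhdsWithin_of_tendsto_nhds_of_eventually_within
        · have hcont : Continuous (fun p' : Baire × Baire => component p'.1 n) :=
            (continuous_component n).comp continuous_fst
          have ht := (hcont.tendsto (w, Yw)).mono_left
            (nhdsWithin_le_nhds :  𝓝[A] (w, Yw) ≤ 𝓝 (w, Yw))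
          rwa [show component (w, Yw).1 n = (fun _ => 0 : Baire) from hy] at ht
        · filter_upwards [evA] with p' hp'
          obtain ⟨w', hw', rfl⟩ := hp'
          exact hw'.1 n
      have hG2blk : Filter.Tendsto (fun p' : Baire × Baire => G2 (component p'.1 n))
          (𝓝[A] (w, Yw)) (𝓝 (G2 (fun _ => 0))) :=
        Filter.Tendsto.comp (hG2cont _ h0g) hblk
      have hHt : Filter.Tendsto
          (fun p' : Baire × Baire => parMap h (G2 (component p'.1 n)))
          (𝓝[A] (w, Yw)) (𝓝 (parMap h (G2 (fun _ => 0)))) := by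
        refine baire_tendsto_iff.2 ?_
        intro pp
        obtain ⟨P, hP⟩ := hA ((Nat.unpair pp).1) ((Nat.unpair pp).2 + 1)
        have ev1 : ∀ᶠ p' in 𝓝[A] (w, Yw),
            ∀ i ≤ Nat.pair ((Nat.unpair pp).1) P,
              G2 (component p'.1 n) i = G2 (fun _ => 0) i :=
          hG2blk.eventually (eventually_agree _ _)
        filter_upwards [ev1, evA] with p' h1 hp'
        obtain ⟨w', hw', rfl⟩ := hp'
        have h1' : ∀ i ≤ Nat.pair ((Nat.unpair pp).1) P,
            G2 (component w' n) i = G2 (fun _ => 0) i := h1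
        show h (component (G2 (component w' n)) ((Nat.unpair pp).1)) ((Nat.unpair pp).2)
          = h (component (G2 (fun _ => 0)) ((Nat.unpair pp).1)) ((Nat.unpair pp).2)
        refine hP _ ((hG2maps (hw'.1 n)).1 _) ?_ _ (Nat.lt_succ_self _)
        intro i hi
        exact h1' (Nat.pair ((Nat.unpair pp).1) i) (pair_le_pair_right _ hi.le)
      have hmemΓ : ((fun _ => 0 : Baire), parMap h (G2 (fun _ => 0)))
          ∈ ((fun y => (y, parMap h (G2 y))) '' domg) := ⟨_, h0g, rfl⟩
      have hΘt : Filter.Tendsto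
          (fun p' : Baire × Baire => (component p'.1 n, parMap h (G2 (component p'.1 n))))
          (𝓝[A] (w, Yw))
          (𝓝[(fun y => (y, parMap h (G2 y))) '' domg]
            ((fun _ => 0 : Baire), parMap h (G2 (fun _ => 0)))) := by
        apply tendsto_nhdsWithin_of_tendsto_nhds_of_eventually_within
        · exact (hblk.mono_right nhdsWithin_le_nhds).prodMk_nhds hHt
        · filter_upwards [evA] with p' hp'
          obtain ⟨w', hw', rfl⟩ := hp'
          exact ⟨_, hw'.1 n, rfl⟩
      have hF2t := Filter.Tendsto.comp (hF2cont _ hmemΓ) hΘt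
      have evF2 : ∀ᶠ p' in 𝓝[A] (w, Yw),
          F2 (component p'.1 n, parMap h (G2 (component p'.1 n))) m
            = F2 ((fun _ => 0), parMap h (G2 (fun _ => 0))) m :=
        nat_tendsto_iff.1 (tendsto_pi_nhds.1 hF2t m)
      filter_upwards [evA, evF2] with p' hp' hF2v
      obtain ⟨w', hw', rfl⟩ := hp'
      have hF2v' : F2 (component w' n, parMap h (G2 (component w' n))) m
          = F2 ((fun _ => 0), parMap h (G2 (fun _ => 0))) m := hF2v
      rw [hval]
      by_cases hz' : component w' n = (fun _ => 0)
      · rw [Fbig_apply, if_pos hz', Psi0_graph]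
      · rw [Fbig_apply, if_neg hz', PsiC_graph G2 kst u h (isElem_mk hz')]
        simp only [Nat.unpair_pair]
        exact hF2v'
  -- ===================== CASE: the n-th block of w is nonzero =====================
  · have hc0 : isElem w (Nat.pair n (delta (component w n))) := isElem_mk hy
    have hval : Fbig F2 (w, Yw) q
        = F2 (component w n, parMap h (G2 (component w n))) m := by
      rw [Fbig_apply, if_neg hy, hYwdef, PsiC_graph G2 kst u h hc0]
      simp only [Nat.unpair_pair]
      rfl
    have hΘcont : Continuous (fun p' : Baire × Baire =>
        ((component p'.1 n : Baire), PsiC (Nat.pair n (delta (component w n))) p'.2)) :=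
      ((continuous_component n).comp continuous_fst).prodMk
        ((continuous_PsiC _).comp continuous_snd)
    have hmemΓ : (component w n, parMap h (G2 (component w n)))
        ∈ ((fun y => (y, parMap h (G2 y))) '' domg) := ⟨_, hw.1 n, rfl⟩
    have hgoalpt : (component w n, PsiC (Nat.pair n (delta (component w n))) Yw)
        = (component w n, parMap h (G2 (component w n))) := by
      rw [hYwdef, PsiC_graph G2 kst u h hc0]
      simp only [Nat.unpair_pair]
    have evΓ : ∀ᶠ p' in 𝓝[A] (w, Yw),
        (component p'.1 n, PsiC (Nat.pair n (delta (component w n))) p'.2)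
          ∈ ((fun y => (y, parMap h (G2 y))) '' domg) := by
      filter_upwards [evA,
        (evag (Nat.pair n (delta (component w n)))).mono (fun p' hh => hh.1)]
        with p' hp' hag1
      obtain ⟨w', hw', rfl⟩ := hp'
      have hag1' : ∀ i ≤ Nat.pair n (delta (component w n)), w' i = w i := hag1
      have hE' : isElem w' (Nat.pair n (delta (component w n))) :=
        (isElem_local (fun p hp => hag1' p hp)).2 hc0
      refine ⟨component w' n, hw'.1 n, ?_⟩
      rw [PsiC_graph G2 kst u h hE']
      simp only [Nat.unpair_pair]
    have hΘt : Filter.Tendsto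
        (fun p' : Baire × Baire =>
          ((component p'.1 n : Baire), PsiC (Nat.pair n (delta (component w n))) p'.2))
        (𝓝[A] (w, Yw))
        (𝓝[(fun y => (y, parMap h (G2 y))) '' domg]
          (component w n, parMap h (G2 (component w n)))) := by
      apply tendsto_nhdsWithin_of_tendsto_nhds_of_eventually_within
      · have ht := (hΘcont.tendsto (w, Yw)).mono_left
          (nhdsWithin_le_nhds :  𝓝[A] (w, Yw) ≤ 𝓝 (w, Yw))
        rwa [show ((component (w, Yw).1 n : Baire),
          PsiC (Nat.pair n (delta (component w n))) (w, Yw).2) =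
            (component w n, PsiC (Nat.pair n (delta (component w n))) Yw) from rfl,
          hgoalpt] at ht
      · exact evΓ
    have hF2t := Filter.Tendsto.comp (hF2cont _ hmemΓ) hΘt
    have evF2 : ∀ᶠ p' in 𝓝[A] (w, Yw),
        F2 (component p'.1 n, PsiC (Nat.pair n (delta (component w n))) p'.2) m
          = F2 (component w n, parMap h (G2 (component w n))) m :=
      nat_tendsto_iff.1 (tendsto_pi_nhds.1 hF2t m)
    filter_upwards [evF2,
      (evag (Nat.pair n (delta (component w n)))).mono (fun p' hh => hh.1)]
      with p' hF2v hag1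
    obtain ⟨x', Y'⟩ := p'
    have hag1' : ∀ i ≤ Nat.pair n (delta (component w n)), x' i = w i := hag1
    have hF2v' : F2 (component x' n, PsiC (Nat.pair n (delta (component w n))) Y') m
        = F2 (component w n, parMap h (G2 (component w n))) m := hF2v
    have hyδ : component x' n (delta (component w n)) ≠ 0 := by
      have he : x' (Nat.pair n (delta (component w n)))
          = w (Nat.pair n (delta (component w n))) := hag1' _ le_rfl
      show x' (Nat.pair n (delta (component w n))) ≠ 0
      rw [he]
      exact delta_spec hy
    have hyn' : component x' n ≠ (fun _ => 0) := by
      intro h0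
      rw [h0] at hyδ
      exact hyδ rfl
    have hδeq : delta (component x' n) = delta (component w n) := by
      refine delta_eq hyδ ?_
      intro i hi
      have he : x' (Nat.pair n i) = w (Nat.pair n i) :=
        hag1' _ (pair_le_pair_right n hi.le)
      show x' (Nat.pair n i) = 0
      rw [he]
      exact (delta_lt hi : component w n i = 0)
    rw [hval, Fbig_apply, if_neg hyn', hδeq]
    exact hF2v'

end Construction

/-! ### Transitivity of WLE and the main theorem -/

lemma WLE_trans {f : Baire → Baire} {domf : Set Baire} {m1 : Baire → Baire}
    {dm1 : Set Baire} {m2 : Baire → Baire} {dm2 : Set Baire}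
    (h1 : WLE f domf m1 dm1) (h2 : WLE m1 dm1 m2 dm2) : WLE f domf m2 dm2 := by
  obtain ⟨G1, F1, hG1c, hG1m, hF1c, hF1e⟩ := h1
  obtain ⟨G2, F2, hG2c, hG2m, hF2c, hF2e⟩ := h2
  refine ⟨fun x => G2 (G1 x), fun p => F1 (p.1, F2 (G1 p.1, p.2)), ?_, ?_, ?_, ?_⟩
  · exact hG2c.comp hG1c hG1m
  · exact fun x hx => hG2m (hG1m hx)
  · have hfstm : Set.MapsTo (fun p : Baire × Baire => p.1)
        ((fun x => (x, m2 (G2 (G1 x)))) '' domf) domf := by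
      rintro _ ⟨x, hx, rfl⟩
      exact hx
    have hΨ : ContinuousOn (fun p : Baire × Baire => (G1 p.1, p.2))
        ((fun x => (x, m2 (G2 (G1 x)))) '' domf) := by
      refine ContinuousOn.prodMk ?_ (continuous_snd.continuousOn)
      exact hG1c.comp (continuous_fst.continuousOn) hfstm
    have hΨm : Set.MapsTo (fun p : Baire × Baire => (G1 p.1, p.2))
        ((fun x => (x, m2 (G2 (G1 x)))) '' domf)
        ((fun y => (y, m2 (G2 y))) '' dm1) := by
      rintro _ ⟨x, hx, rfl⟩
      exact ⟨G1 x, hG1m hx, rfl⟩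
    have hF2Ψ : ContinuousOn (fun p : Baire × Baire => F2 (G1 p.1, p.2))
        ((fun x => (x, m2 (G2 (G1 x)))) '' domf) :=
      hF2c.comp hΨ hΨm
    have hΦ : ContinuousOn (fun p : Baire × Baire => (p.1, F2 (G1 p.1, p.2)))
        ((fun x => (x, m2 (G2 (G1 x)))) '' domf) :=
      (continuous_fst.continuousOn).prodMk hF2Ψ
    have hΦm : Set.MapsTo (fun p : Baire × Baire => (p.1, F2 (G1 p.1, p.2)))
        ((fun x => (x, m2 (G2 (G1 x)))) '' domf)
        ((fun x => (x, m1 (G1 x))) '' domf) := by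
      rintro _ ⟨x, hx, rfl⟩
      refine ⟨x, hx, ?_⟩
      show (x, m1 (G1 x)) = (x, F2 (G1 x, m2 (G2 (G1 x))))
      rw [hF2e _ (hG1m hx)]
    exact hF1c.comp hΦ hΦm
  · intro x hx
    rw [hF1e x hx, hF2e _ (hG1m hx)]

theorem gfin_le_hfin {g h : Baire → Baire} {domg domh : Set Baire}
    (hgh : WLE g domg (parMap h) (finParDom domh)) :
    WLE (parMap g) (finParDom domg) (parMap h) (finParDom domh) := by
  obtain ⟨G2, F2, hG2c, hG2m, hF2c, hF2e⟩ := hgh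
  by_cases hD : (finParDom domg).Nonempty
  · obtain ⟨w0, hw0⟩ := hD
    have h0g : (fun _ => 0 : Baire) ∈ domg := zero_mem_of_finPar hw0
    have hz : G2 (fun _ => 0) ∈ finParDom domh := hG2m h0g
    by_cases hB : ∃ kst Vst : ℕ, ∀ P : ℕ, ∃ uu, uu ∈ domh ∧
        (∀ i < P, uu i = component (G2 (fun _ => 0)) kst i) ∧
        ∃ j < Vst, h uu j ≠ h (component (G2 (fun _ => 0)) kst) j
    · obtain ⟨kst, Vst, hBk⟩ := hB
      choose uu hmem hclose hdiff using hBk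
      exact ⟨Gbig G2 kst uu, Fbig F2,
        Gbig_cont G2 kst uu hG2c hclose,
        Gbig_maps G2 kst uu hG2m h0g hmem,
        Fbig_cont G2 kst uu h F2 Vst hG2c hG2m hF2c h0g (Or.inl hdiff),
        Fbig_correct G2 kst uu h g F2 hF2e h0g⟩
    · push_neg at hB
      exact ⟨Gbig G2 0 (fun _ => component (G2 (fun _ => 0)) 0), Fbig F2,
        Gbig_cont G2 0 _ hG2c (fun P i _ => rfl),
        Gbig_maps G2 0 _ hG2m h0g (fun P => hz.1 0),
        Fbig_cont G2 0 _ h F2 0 hG2c hG2m hF2c h0g (Or.inr hB),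
        Fbig_correct G2 0 _ h g F2 hF2e h0g⟩
  · rw [Set.not_nonempty_iff_eq_empty] at hD
    rw [hD]
    exact ⟨id, fun p => p.2, continuousOn_empty _, Set.mapsTo_empty _ _,
      by rw [Set.image_empty]; exact continuousOn_empty _,
      fun x hx => absurd hx (Set.notMem_empty x)⟩

end FT

theorem f_trans (f g h : Baire → Baire) (domf domg domh : Set Baire)
    (hfg : WLE f domf (parMap g) (finParDom domg))
    (hgh : WLE g domg (parMap h) (finParDom domh)) :
    WLE f domf (parMap h) (finParDom domh) :=
  FT.WLE_trans hfg (FT.gfin_le_hfin hgh)
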